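/- For the symmetric Rayleigh product channel with $n_0 = \cdots = n_N = n$ and $N \ge n$, the diversity at integer multiplexing gain $k$ equals $\frac{(n-k)(n+1-k)}{2}$, i.e. $\sum_{i=k+1}^{n} c_i = \frac{(n-k)(n+1-k)}{2}$ where $c_i = 1 - i + \min_{m=1,\ldots,N} \lfloor ((m+1)n - i)/m \rfloor$. -/

import Mathlib

lemma rp_aux_sum (d : ℕ) (a : ℤ) :
    (∑ i ∈ Finset.Icc (a + 1) (a + (d : ℤ)), (a + (d : ℤ) + 1 - i)) * 2
      = (d : ℤ) * ((d : ℤ) + 1) := by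
  induction d with
  | zero => simp
  | succ d ih =>
    have hcast : (a + ((d + 1 : ℕ) : ℤ)) = (a + (d : ℤ)) + 1 := by push_cast; ring
    have hins : Finset.Icc (a + 1) (a + (d : ℤ) + 1)
        = insert (a + (d : ℤ) + 1) (Finset.Icc (a + 1) (a + (d : ℤ))) := by
      ext x; simp only [Finset.mem_Icc, Finset.mem_insert]; omega
    have hnot : a + (d : ℤ) + 1 ∉ Finset.Icc (a + 1) (a + (d : ℤ)) := by
      simp only [Finset.mem_Icc]; omega
    rw [hcast, hins, Finset.sum_insert hnot]
    have hsum : ∑ i ∈ Finset.Icc (a + 1) (a + (d : ℤ)), (a + (d : ℤ) + 1 + 1 - i)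
        = (∑ i ∈ Finset.Icc (a + 1) (a + (d : ℤ)), (a + (d : ℤ) + 1 - i)) + (d : ℤ) := by
      have hcard : (Finset.Icc (a + 1) (a + (d : ℤ))).card = d := by
        rw [Int.card_Icc]; omega
      calc ∑ i ∈ Finset.Icc (a + 1) (a + (d : ℤ)), (a + (d : ℤ) + 1 + 1 - i)
          = ∑ i ∈ Finset.Icc (a + 1) (a + (d : ℤ)), ((a + (d : ℤ) + 1 - i) + 1) := by
            apply Finset.sum_congr rfl; intro i _; ring
        _ = _ := by
            rw [Finset.sum_add_distrib, Finset.sum_const, hcard]; simp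
    rw [hsum]
    push_cast
    nlinarith [ih]

/-- For the symmetric `(n, …, n)` Rayleigh product channel with `N ≥ n`
hops, the diversity at integer multiplexing gain `k` equals `(n-k)(n+1-k)/2`. -/
theorem rp_symmetric_dmt_long (N n : ℕ) (hn : 1 ≤ n) (hNn : n ≤ N)
    (k : ℕ) (hk : k ≤ n)
    (c : ℤ → ℤ)
    (hc : ∀ i : ℤ, c i = 1 - i +
      (Finset.Icc 1 N).inf' (Finset.nonempty_Icc.mpr (hn.trans hNn))
        (fun m => Int.fdiv (((m : ℤ) + 1) * n - i) (m : ℤ))) :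
    ((∑ i ∈ Finset.Icc (k + 1 : ℤ) (n : ℤ), c i : ℤ) : ℚ)
      = ((n : ℚ) - k) * ((n : ℚ) + 1 - k) / 2 := by
  have key : ∀ i ∈ Finset.Icc (k + 1 : ℤ) (n : ℤ), c i = ((n : ℤ)) + 1 - i := by
    intro i hi
    simp only [Finset.mem_Icc] at hi
    have hi1 : (1 : ℤ) ≤ i := by omega
    have hin : i ≤ (n : ℤ) := hi.2
    rw [hc]
    have hfd : ∀ m ∈ Finset.Icc 1 N,
        Int.fdiv (((m : ℤ) + 1) * n - i) (m : ℤ) = ((n : ℤ) - i) / (m : ℤ) + n := by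
      intro m hm
      simp only [Finset.mem_Icc] at hm
      have hm0 : (m : ℤ) ≠ 0 := by exact_mod_cast Nat.one_le_iff_ne_zero.mp hm.1
      rw [Int.fdiv_eq_ediv_of_nonneg _ (by positivity)]
      rw [show ((m : ℤ) + 1) * n - i = ((n : ℤ) - i) + (n : ℤ) * m by ring]
      rw [Int.add_mul_ediv_right _ _ hm0]
    have hmin : (Finset.Icc 1 N).inf' (Finset.nonempty_Icc.mpr (hn.trans hNn))
        (fun m => Int.fdiv (((m : ℤ) + 1) * n - i) (m : ℤ)) = (n : ℤ) := by
      apply le_antisymm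
      · have hNmem : N ∈ Finset.Icc 1 N := by
          simp [Finset.mem_Icc]; omega
        refine le_trans (Finset.inf'_le _ hNmem) ?_
        rw [hfd N hNmem]
        have : ((n : ℤ) - i) / (N : ℤ) = 0 := by
          apply Int.ediv_eq_zero_of_lt (by omega)
          have : (n : ℤ) ≤ N := by exact_mod_cast hNn
          omega
        omega
      · apply Finset.le_inf'
        intro m hm
        rw [hfd m hm]
        have : 0 ≤ ((n : ℤ) - i) / (m : ℤ) :=
          Int.ediv_nonneg (by omega) (by positivity)
        omega
    rw [hmin]
    ring
  rw [Finset.sum_congr rfl key]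
  have hb : (k : ℤ) + ((n - k : ℕ) : ℤ) = (n : ℤ) := by omega
  have h2 := rp_aux_sum (n - k) (k : ℤ)
  rw [hb] at h2
  have hcq := congrArg (fun z : ℤ => (z : ℚ)) h2
  push_cast [Nat.cast_sub hk] at hcq ⊢
  linarith
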